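/- Assume Assumption A holds and that ∇f : 𝕏 → 𝕏 is locally Lipschitz continuous. Then each accumulation point x* of a sequence {x^k} generated by the monotone proximal gradient method is an M-stationary point, i.e., x* ∈ dom φ and 0 ∈ ∇f(x*) + ∂φ(x*). (Theorem 3.6, second case.) -/

import Mathlib

open Filter Topology RealInnerProductSpace

noncomputable section

variable {E : Type*} [NormedAddCommGroup E] [InnerProductSpace ℝ E] [FiniteDimensional ℝ E]

/-- The objective `ψ = f + φ`, with values in `EReal`. -/
def psi (f : E → ℝ) (φ : E → EReal) (x : E) : EReal :=
  (f x : EReal) + φ x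

/-- `φ` is bounded from below by an affine function. -/
def AffineBoundedBelow (φ : E → EReal) : Prop :=
  ∃ (a : E) (b : ℝ), ∀ x : E, ((⟪a, x⟫ + b : ℝ) : EReal) ≤ φ x

/-- Objective of the proximal subproblem at `xb` with parameter `γ`. -/
def proxObj (f : E → ℝ) (φ : E → EReal) (xb : E) (γ : ℝ) (x : E) : EReal :=
  ((f xb + ⟪gradient f xb, x - xb⟫ + γ / 2 * ‖x - xb‖ ^ 2 : ℝ) : EReal) + φ x

/-- `x` is a global minimizer of the proximal subproblem at `xb` with parameter `γ`. -/
def IsProxMin (f : E → ℝ) (φ : E → EReal) (xb : E) (γ : ℝ) (x : E) : Prop :=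
  ∀ y : E, proxObj f φ xb γ x ≤ proxObj f φ xb γ y

/-- Fréchet (regular) subdifferential of `φ` at `x`. -/
def FrechetSubdiff (φ : E → EReal) (x : E) : Set E :=
  {η : E | ∀ ε : ℝ, 0 < ε →
    ∀ᶠ y in 𝓝[≠] x, φ x + ((⟪η, y - x⟫ - ε * ‖y - x‖ : ℝ) : EReal) ≤ φ y}

/-- Limiting (Mordukhovich) subdifferential of `φ` at `x`. -/
def LimitingSubdiff (φ : E → EReal) (x : E) : Set E :=
  {η : E | ∃ u v : ℕ → E,
    Tendsto u atTop (𝓝 x) ∧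
    Tendsto (fun j => φ (u j)) atTop (𝓝 (φ x)) ∧
    Tendsto v atTop (𝓝 η) ∧
    ∀ j : ℕ, v j ∈ FrechetSubdiff φ (u j)}

/-- `x` is an M-stationary point of `min f + φ`. -/
def MStationary (f : E → ℝ) (φ : E → EReal) (x : E) : Prop :=
  φ x ≠ ⊤ ∧ -gradient f x ∈ LimitingSubdiff φ x

/-- `ψ` is bounded from below on `dom φ`. -/
def PsiBddBelow (f : E → ℝ) (φ : E → EReal) : Prop :=
  ∃ c : ℝ, ∀ z : E, φ z ≠ ⊤ → (c : EReal) ≤ psi f φ z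

/-- The monotone proximal gradient method (Algorithm 3.1). -/
structure MonoPG (f : E → ℝ) (φ : E → EReal) (τ γmin γmax δ : ℝ)
    (x : ℕ → E) (γ : ℕ → ℝ) : Prop where
  dom : ∀ k : ℕ, φ (x k) ≠ ⊤
  stepsize : ∀ k : ℕ, ∃ γ0 : ℝ, ∃ i : ℕ, γ0 ∈ Set.Icc γmin γmax ∧ γ k = τ ^ i * γ0 ∧
    (1 ≤ i → ∃ xh : E, IsProxMin f φ (x k) (γ k / τ) xh ∧
      psi f φ (x k) < psi f φ xh + ((δ * (γ k / τ) / 2 * ‖xh - x k‖ ^ 2 : ℝ) : EReal))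
  isMin : ∀ k : ℕ, IsProxMin f φ (x k) (γ k) (x (k + 1))
  accept : ∀ k : ℕ,
    psi f φ (x (k + 1)) + ((δ * γ k / 2 * ‖x (k + 1) - x k‖ ^ 2 : ℝ) : EReal) ≤ psi f φ (x k)

/-- The nonmonotone reference value `max_{j=0,…,min{k,m}} ψ(x^{k-j})`. -/
def nmax (f : E → ℝ) (φ : E → EReal) (x : ℕ → E) (m k : ℕ) : EReal :=
  (Finset.range (min k m + 1)).sup fun j => psi f φ (x (k - j))

/-- The nonmonotone proximal gradient method (Algorithm 4.1). -/
structure NonmonoPG (f : E → ℝ) (φ : E → EReal) (τ γmin γmax δ : ℝ) (m : ℕ)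
    (x : ℕ → E) (γ : ℕ → ℝ) : Prop where
  dom : ∀ k : ℕ, φ (x k) ≠ ⊤
  stepsize : ∀ k : ℕ, ∃ γ0 : ℝ, ∃ i : ℕ, γ0 ∈ Set.Icc γmin γmax ∧ γ k = τ ^ i * γ0 ∧
    (1 ≤ i → ∃ xh : E, IsProxMin f φ (x k) (γ k / τ) xh ∧
      nmax f φ x m k < psi f φ xh + ((δ * (γ k / τ) / 2 * ‖xh - x k‖ ^ 2 : ℝ) : EReal))
  isMin : ∀ k : ℕ, IsProxMin f φ (x k) (γ k) (x (k + 1))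
  accept : ∀ k : ℕ,
    psi f φ (x (k + 1)) + ((δ * γ k / 2 * ‖x (k + 1) - x k‖ ^ 2 : ℝ) : EReal) ≤ nmax f φ x m k

/-- `l` realizes the nonmonotone maximum `ψ(x^{l(k)}) = max_{j=0,…,m_k} ψ(x^{k-j})`,
with `l k ∈ {k - m_k, …, k}`. -/
def RealizesNMax (f : E → ℝ) (φ : E → EReal) (x : ℕ → E) (m : ℕ) (l : ℕ → ℕ) : Prop :=
  ∀ k : ℕ, k - min k m ≤ l k ∧ l k ≤ k ∧ psi f φ (x (l k)) = nmax f φ x m k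

/-- `ψ` is uniformly continuous on the sublevel set `L_ψ(x⁰)`. -/
def UnifContOnLevelSet (f : E → ℝ) (φ : E → EReal) (x0 : E) : Prop :=
  ∀ ε : ℝ, 0 < ε → ∃ η : ℝ, 0 < η ∧ ∀ u v : E,
    psi f φ u ≤ psi f φ x0 → psi f φ v ≤ psi f φ x0 → ‖u - v‖ ≤ η →
    psi f φ u ≤ psi f φ v + (ε : EReal)

/-- `φ` is continuous on its domain `dom φ`. -/
def ContOnDom (φ : E → EReal) : Prop :=
  ∀ x : E, φ x ≠ ⊤ → ∀ y : ℕ → E, (∀ j : ℕ, φ (y j) ≠ ⊤) →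
    Tendsto y atTop (𝓝 x) → Tendsto (fun j => φ (y j)) atTop (𝓝 (φ x))


section Aux

lemma descent_lemma_aux (f : E → ℝ) (hf : ContDiff ℝ 1 f) (L : ℝ) (s : Set E) (hs : Convex ℝ s)
    (hL : ∀ u ∈ s, ∀ v ∈ s, ‖gradient f u - gradient f v‖ ≤ L * ‖u - v‖)
    (u v : E) (hu : u ∈ s) (hv : v ∈ s) :
    f v ≤ f u + ⟪gradient f u, v - u⟫ + L / 2 * ‖v - u‖ ^ 2 := by
  set d := v - u with hd
  have hdiff := hf.differentiable one_ne_zero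
  have hfd : ∀ x y : E, fderiv ℝ f x y = ⟪gradient f x, y⟫ := by
    intro x y
    rw [gradient]; simp [InnerProductSpace.toDual_symm_apply]
  set g : ℝ → ℝ := fun t => f (u + t • d) - t * ⟪gradient f u, d⟫ - L / 2 * t ^ 2 * ‖d‖ ^ 2 with hg
  have hline : ∀ t : ℝ, HasDerivAt (fun t : ℝ => u + t • d) d t := by
    intro t
    simpa using ((hasDerivAt_id t).smul_const d).const_add u
  have hgd : ∀ t : ℝ, HasDerivAt g
      (⟪gradient f (u + t • d), d⟫ - ⟪gradient f u, d⟫ - L * t * ‖d‖ ^ 2) t := by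
    intro t
    have h1 : HasDerivAt (fun t : ℝ => f (u + t • d)) (fderiv ℝ f (u + t • d) d) t :=
      (hdiff (u + t • d)).hasFDerivAt.comp_hasDerivAt t (hline t)
    rw [hfd] at h1
    have h2 : HasDerivAt (fun t : ℝ => t * ⟪gradient f u, d⟫) ⟪gradient f u, d⟫ t := by
      simpa using (hasDerivAt_id t).mul_const (⟪gradient f u, d⟫)
    have h3 : HasDerivAt (fun t : ℝ => L / 2 * t ^ 2 * ‖d‖ ^ 2) (L * t * ‖d‖ ^ 2) t := by
      have := ((hasDerivAt_pow 2 t).const_mul (L / 2)).mul_const (‖d‖ ^ 2)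
      refine this.congr_deriv ?_
      ring
    exact (h1.sub h2).sub h3
  have hmem : ∀ t ∈ Set.Icc (0:ℝ) 1, u + t • d ∈ s := by
    intro t ht
    simpa using hs.add_smul_sub_mem hu hv ht
  have hderiv_nonpos : ∀ t ∈ Set.Ioo (0:ℝ) 1, deriv g t ≤ 0 := by
    intro t ht
    rw [(hgd t).deriv]
    have hw : u + t • d ∈ s := hmem t (Set.mem_Icc_of_Ioo ht)
    have heq : ⟪gradient f (u + t • d), d⟫ - ⟪gradient f u, d⟫
        = ⟪gradient f (u + t • d) - gradient f u, d⟫ := by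
      rw [inner_sub_left]
    rw [heq]
    have h4 : ⟪gradient f (u + t • d) - gradient f u, d⟫ ≤ L * t * ‖d‖ ^ 2 := by
      calc ⟪gradient f (u + t • d) - gradient f u, d⟫
          ≤ ‖gradient f (u + t • d) - gradient f u‖ * ‖d‖ := real_inner_le_norm _ _
        _ ≤ (L * ‖(u + t • d) - u‖) * ‖d‖ := by
            gcongr; exact hL _ hw _ hu
        _ = L * t * ‖d‖ ^ 2 := by
            simp [norm_smul, abs_of_pos ht.1]; ring
    linarith
  have hanti : AntitoneOn g (Set.Icc (0:ℝ) 1) := by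
    apply antitoneOn_of_deriv_nonpos (convex_Icc 0 1)
    · exact fun t _ => ((hgd t).continuousAt).continuousWithinAt
    · intro t _
      exact (hgd t).differentiableAt.differentiableWithinAt
    · intro t ht
      rw [interior_Icc] at ht
      exact hderiv_nonpos t ht
  have hfin := hanti (Set.left_mem_Icc.2 zero_le_one) (Set.right_mem_Icc.2 zero_le_one) zero_le_one
  simp only [hg] at hfin
  have huv : u + (1:ℝ) • d = v := by rw [hd]; simp
  rw [huv] at hfin
  simp at hfin
  rw [hfd] at hfin
  linarith

lemma prox_frechet_aux (f : E → ℝ) (φ : E → EReal) (hbot : ∀ z : E, φ z ≠ ⊥)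
    (xb : E) (γ : ℝ) (hγ : 0 < γ) (xp : E)
    (hmin : IsProxMin f φ xb γ xp) (hxp : φ xp ≠ ⊤) :
    -gradient f xb - γ • (xp - xb) ∈ FrechetSubdiff φ xp := by
  obtain ⟨P, hP⟩ : ∃ P : ℝ, φ xp = (P : EReal) :=
    ⟨(φ xp).toReal, ((φ xp).coe_toReal hxp (hbot xp)).symm⟩
  intro ε hε
  have hball : ∀ᶠ y in 𝓝 xp, y ∈ Metric.ball xp (2 * ε / γ) :=
    Metric.ball_mem_nhds xp (by positivity)
  filter_upwards [nhdsWithin_le_nhds hball] with y hy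
  rcases eq_or_ne (φ y) ⊤ with hytop | hytop
  · rw [hytop]; exact le_top
  obtain ⟨Q, hQ⟩ : ∃ Q : ℝ, φ y = (Q : EReal) :=
    ⟨(φ y).toReal, ((φ y).coe_toReal hytop (hbot y)).symm⟩
  have hm := hmin y
  rw [proxObj, proxObj, hP, hQ, ← EReal.coe_add, ← EReal.coe_add, EReal.coe_le_coe_iff] at hm
  rw [hP, hQ, ← EReal.coe_add, EReal.coe_le_coe_iff]
  set g := gradient f xb
  have hnorm : ‖y - xb‖ ^ 2 = ‖y - xp‖ ^ 2 + 2 * ⟪y - xp, xp - xb⟫ + ‖xp - xb‖ ^ 2 := by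
    have h5 : y - xb = (y - xp) + (xp - xb) := by abel
    rw [h5, norm_add_sq_real]
  have hinner1 : ⟪g, y - xb⟫ = ⟪g, y - xp⟫ + ⟪g, xp - xb⟫ := by
    rw [← inner_add_right]; congr 1; abel
  have hinner2 : ⟪-g - γ • (xp - xb), y - xp⟫
      = -⟪g, y - xp⟫ - γ * ⟪xp - xb, y - xp⟫ := by
    rw [inner_sub_left, inner_neg_left, inner_smul_left]
    norm_num
  have hsym : ⟪xp - xb, y - xp⟫ = ⟪y - xp, xp - xb⟫ := real_inner_comm _ _
  have hsmall : γ / 2 * ‖y - xp‖ ^ 2 ≤ ε * ‖y - xp‖ := by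
    have hlt : ‖y - xp‖ < 2 * ε / γ := by
      rw [Metric.mem_ball, dist_eq_norm] at hy
      exact hy
    have h2 : ‖y - xp‖ * γ < 2 * ε := (lt_div_iff₀ hγ).1 hlt
    nlinarith [norm_nonneg (y - xp)]
  rw [hinner1, hnorm] at hm
  rw [hinner2, hsym]
  linarith

end Aux

set_option maxHeartbeats 2000000 in
/-- Theorem 3.6, second case: under Assumption A, if `∇f` is locally Lipschitz continuous,
then each accumulation point of a sequence generated by the monotone proximal gradient
method is an M-stationary point. -/
theorem stmt_11
    (f : E → ℝ) (φ : E → EReal) (hf : ContDiff ℝ 1 f)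
    (hbot : ∀ z : E, φ z ≠ ⊥) (hlsc : LowerSemicontinuous φ)
    (τ γmin γmax δ : ℝ) (hτ : 1 < τ) (hγmin : 0 < γmin) (hγmm : γmin ≤ γmax)
    (hδ : δ ∈ Set.Ioo (0 : ℝ) 1)
    (x : ℕ → E) (γ : ℕ → ℝ)
    (hpsibdd : PsiBddBelow f φ) (haff : AffineBoundedBelow φ)
    (hlip : ∀ z : E, ∃ L : ℝ, 0 < L ∧ ∃ U ∈ 𝓝 z, ∀ u ∈ U, ∀ v ∈ U,
      ‖gradient f u - gradient f v‖ ≤ L * ‖u - v‖)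
    (hM : MonoPG f φ τ γmin γmax δ x γ)
    (xstar : E) (K : ℕ → ℕ) (hK : StrictMono K)
    (hconv : Tendsto (fun n => x (K n)) atTop (𝓝 xstar)) :
    MStationary f φ xstar := by
  obtain ⟨hδ0, hδ1⟩ := hδ
  have hτ0 : (0:ℝ) < τ := by linarith
  -- real representatives
  set p : ℕ → ℝ := fun k => (φ (x k)).toReal with hpdef
  have hpk : ∀ k, φ (x k) = ((p k : ℝ) : EReal) :=
    fun k => ((φ (x k)).coe_toReal (hM.dom k) (hbot _)).symm
  set S : ℕ → ℝ := fun k => f (x k) + p k with hSdef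
  clear_value p S
  have hSeq : ∀ k, S k = f (x k) + p k := fun k => by rw [hSdef]
  -- stepsize lower bound
  have hγlb : ∀ k, γmin ≤ γ k := by
    intro k
    obtain ⟨γ0, i, ⟨h1, _⟩, h3, -⟩ := hM.stepsize k
    rw [h3]
    have hpow : (1:ℝ) ≤ τ ^ i := one_le_pow₀ (le_of_lt hτ)
    nlinarith [lt_of_lt_of_le hγmin h1]
  have hγ0 : ∀ k, 0 < γ k := fun k => lt_of_lt_of_le hγmin (hγlb k)
  -- accept in real form
  have haccept : ∀ k, S (k+1) + δ * γ k / 2 * ‖x (k+1) - x k‖^2 ≤ S k := by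
    intro k
    have h := hM.accept k
    rw [psi, psi, hpk k, hpk (k+1)] at h
    rw [hSeq, hSeq]
    exact_mod_cast h
  have hSmono : ∀ k, S (k+1) ≤ S k := by
    intro k
    have h0 : 0 ≤ δ * γ k / 2 * ‖x (k+1) - x k‖^2 :=
      mul_nonneg (le_of_lt (div_pos (mul_pos hδ0 (hγ0 k)) two_pos)) (sq_nonneg _)
    linarith [haccept k]
  have hSanti : Antitone S := antitone_nat_of_succ_le hSmono
  obtain ⟨c, hc⟩ := hpsibdd
  have hSlb : ∀ k, c ≤ S k := by
    intro k
    have h := hc (x k) (hM.dom k)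
    rw [psi, hpk k] at h
    rw [hSeq]
    exact_mod_cast h
  obtain ⟨Sl, hSl⟩ : ∃ l, Tendsto S atTop (𝓝 l) :=
    ⟨_, tendsto_atTop_ciInf hSanti ⟨c, by rintro s ⟨k, rfl⟩; exact hSlb k⟩⟩
  have hdiffS : Tendsto (fun k => S k - S (k+1)) atTop (𝓝 0) := by
    have h2 : Tendsto (fun k => S (k+1)) atTop (𝓝 Sl) := hSl.comp (tendsto_add_atTop_nat 1)
    simpa using hSl.sub h2
  have hgd2 : Tendsto (fun k => γ k * ‖x (k+1) - x k‖^2) atTop (𝓝 0) := by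
    apply squeeze_zero (fun k => mul_nonneg (le_of_lt (hγ0 k)) (sq_nonneg _)) (fun k => ?_)
      (by simpa using hdiffS.const_mul (2/δ))
    calc γ k * ‖x (k+1) - x k‖^2 = (2/δ) * (δ * γ k / 2 * ‖x (k+1) - x k‖^2) := by
          field_simp
      _ ≤ (2/δ) * (S k - S (k+1)) :=
          mul_le_mul_of_nonneg_left (by linarith [haccept k]) (by positivity)
  have hd2 : Tendsto (fun k => ‖x (k+1) - x k‖^2) atTop (𝓝 0) := by
    apply squeeze_zero (fun k => sq_nonneg _) (fun k => ?_)
      (by simpa using hgd2.const_mul γmin⁻¹)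
    have h1 : γmin * ‖x (k+1) - x k‖^2 ≤ γ k * ‖x (k+1) - x k‖^2 :=
      mul_le_mul_of_nonneg_right (hγlb k) (sq_nonneg _)
    calc ‖x (k+1) - x k‖^2 = γmin⁻¹ * (γmin * ‖x (k+1) - x k‖^2) := by field_simp
      _ ≤ γmin⁻¹ * (γ k * ‖x (k+1) - x k‖^2) :=
          mul_le_mul_of_nonneg_left h1 (by positivity)
  have hdnorm : Tendsto (fun k => ‖x (k+1) - x k‖) atTop (𝓝 0) := by
    have h := hd2.sqrt
    simpa [Real.sqrt_sq (norm_nonneg _)] using h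
  have hd0 : Tendsto (fun k => x (k+1) - x k) atTop (𝓝 0) :=
    tendsto_zero_iff_norm_tendsto_zero.2 hdnorm
  have hKtop : Tendsto K atTop atTop := hK.tendsto_atTop
  have hu : Tendsto (fun n => x (K n + 1)) atTop (𝓝 xstar) := by
    have heq : (fun n => x (K n + 1))
        = fun n => x (K n) + (x (K n + 1) - x (K n)) := by
      funext n; abel
    rw [heq]
    simpa using hconv.add ((hd0.comp hKtop))
  have hgradcont : Continuous (fun z => gradient f z) := by
    have h1 : Continuous (fun z => fderiv ℝ f z) := hf.continuous_fderiv one_ne_zero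
    exact (InnerProductSpace.toDual ℝ E).symm.continuous.comp h1
  have hgconv : Tendsto (fun n => gradient f (x (K n))) atTop (𝓝 (gradient f xstar)) :=
    (hgradcont.tendsto _).comp hconv
  have hfconv : Tendsto (fun n => f (x (K n))) atTop (𝓝 (f xstar)) :=
    ((hf.continuous).tendsto _).comp hconv
  have hpkS : ∀ k, f (x k) + p k ≤ S 0 := fun k => by
    rw [← hSeq]; exact hSanti (Nat.zero_le k)
  -- xstar is in the domain
  have hphistar : φ xstar ≠ ⊤ := by
    intro htop
    have hC : ((S 0 - f xstar + 1 : ℝ) : EReal) < φ xstar := by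
      rw [htop]; exact EReal.coe_lt_top _
    have h1 := hconv.eventually (hlsc xstar _ hC)
    have h2 := hfconv.eventually (eventually_gt_nhds (by linarith : f xstar - 1 < f xstar))
    obtain ⟨n, hn1, hn2⟩ := (h1.and h2).exists
    rw [hpk, gt_iff_lt, EReal.coe_lt_coe_iff] at hn1
    have := hpkS (K n)
    linarith
  obtain ⟨ps, hps⟩ : ∃ ps : ℝ, φ xstar = (ps : EReal) :=
    ⟨(φ xstar).toReal, ((φ xstar).coe_toReal hphistar (hbot xstar)).symm⟩
  -- local Lipschitz data
  obtain ⟨L, hLpos, U, hUnhds, hLip⟩ := hlip xstar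
  obtain ⟨r, hrpos, hrU⟩ := Metric.mem_nhds_iff.1 hUnhds
  have hLipB : ∀ u ∈ Metric.ball xstar r, ∀ v ∈ Metric.ball xstar r,
      ‖gradient f u - gradient f v‖ ≤ L * ‖u - v‖ :=
    fun u hu' v hv' => hLip u (hrU hu') v (hrU hv')
  obtain ⟨a, b, hab⟩ := haff
  set G : ℝ := ‖gradient f xstar‖ + 1 with hGdef
  have hGpos : 0 < G := by positivity
  set Cphi : ℝ := S 0 - f xstar + 1 with hCphidef
  set C1 : ℝ := |Cphi| + |b| + ‖a‖ * (‖xstar‖ + r) with hC1def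
  set C2 : ℝ := ‖a‖ + G with hC2def
  have hC1 : 0 ≤ C1 := by
    have h1 : 0 ≤ ‖a‖ * (‖xstar‖ + r) :=
      mul_nonneg (norm_nonneg a) (add_nonneg (norm_nonneg xstar) hrpos.le)
    rw [hC1def]
    linarith [abs_nonneg Cphi, abs_nonneg b]
  have hC2 : 0 < C2 := by
    rw [hC2def]
    linarith [norm_nonneg a]
  clear_value G Cphi C1 C2
  set Γ0 : ℝ := max (L / (1 - δ)) ((8 * C1 + 4 * C2 * r) / r ^ 2) with hΓ0def
  have hΓ0pos : 0 < Γ0 :=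
    lt_max_of_lt_left (div_pos hLpos (by linarith))
  have hΓ0L : L / (1 - δ) ≤ Γ0 := le_max_left _ _
  have hΓ0B : (8 * C1 + 4 * C2 * r) / r ^ 2 ≤ Γ0 := le_max_right _ _
  clear_value Γ0
  set Γ : ℝ := max γmax (τ * Γ0) with hΓdef
  have hΓγmax : γmax ≤ Γ := le_max_left _ _
  have hΓτ : τ * Γ0 ≤ Γ := le_max_right _ _
  clear_value Γ
  -- eventual bounds along the subsequence
  have hev1 : ∀ᶠ n in atTop, dist (x (K n)) xstar < r / 2 :=
    (Metric.tendsto_nhds.1 hconv) _ (half_pos hrpos)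
  have hev2 : ∀ᶠ n in atTop, ‖gradient f (x (K n))‖ ≤ G := by
    filter_upwards [(Metric.tendsto_nhds.1 hgconv) 1 one_pos] with n hn
    rw [dist_eq_norm] at hn
    have := norm_sub_norm_le (gradient f (x (K n))) (gradient f xstar)
    rw [hGdef]; linarith
  have hev3 : ∀ᶠ n in atTop, p (K n) ≤ Cphi := by
    filter_upwards [(Metric.tendsto_nhds.1 hfconv) 1 one_pos] with n hn
    rw [Real.dist_eq, abs_lt] at hn
    have := hpkS (K n)
    rw [hCphidef]; linarith
  -- the key stepsize bound
  have hΓbd : ∀ᶠ n in atTop, γ (K n) ≤ Γ := by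
    filter_upwards [hev1, hev2, hev3] with n h1 h2 h3
    obtain ⟨γ0, i, ⟨hγ01, hγ02⟩, hγeq, hstep⟩ := hM.stepsize (K n)
    match i with
    | 0 =>
      rw [hγeq]
      simp only [pow_zero, one_mul]
      exact le_trans hγ02 hΓγmax
    | (i+1) =>
      obtain ⟨xh, hminh, hfail⟩ := hstep (by omega)
      by_contra hcon
      push_neg at hcon
      set γh : ℝ := γ (K n) / τ with hγhdef
      have hγhpos : 0 < γh := div_pos (hγ0 _) hτ0
      have hγhΓ0 : Γ0 ≤ γh := by
        rw [hγhdef, le_div_iff₀ hτ0]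
        nlinarith [hΓτ]
      clear_value γh
      -- φ xh is finite
      have hminh' := hminh (x (K n))
      have hxhtop : φ xh ≠ ⊤ := by
        intro htop
        rw [proxObj, proxObj, htop, hpk (K n)] at hminh'
        simp only [EReal.coe_add_top] at hminh'
        rw [← EReal.coe_add, top_le_iff] at hminh'
        exact EReal.coe_ne_top _ hminh'
      obtain ⟨ph, hph⟩ : ∃ ph : ℝ, φ xh = (ph : EReal) :=
        ⟨(φ xh).toReal, ((φ xh).coe_toReal hxhtop (hbot xh)).symm⟩
      rw [proxObj, proxObj, hph, hpk (K n), ← EReal.coe_add, ← EReal.coe_add,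
        EReal.coe_le_coe_iff, sub_self, inner_zero_right, norm_zero] at hminh'
      set t : ℝ := ‖xh - x (K n)‖ with htdef
      have htnn : 0 ≤ t := htdef ▸ norm_nonneg _
      clear_value t
      -- hminh' : f xk + ⟪g, xh - xk⟫ + γh/2 * t^2 + ph ≤ f xk + (0 + γh/2 * 0^2) + p k
      have haffh : ⟪a, xh⟫ + b ≤ ph := by
        have h := hab xh
        rw [hph] at h
        exact_mod_cast h
      have hin1 : -(G * t) ≤ ⟪gradient f (x (K n)), xh - x (K n)⟫ := by
        have h := abs_real_inner_le_norm (gradient f (x (K n))) (xh - x (K n))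
        rw [abs_le, ← htdef] at h
        have h2' : ‖gradient f (x (K n))‖ * t ≤ G * t := by gcongr
        linarith [h.1]
      have hin2 : -(‖a‖ * t) - ‖a‖ * (‖xstar‖ + r) ≤ ⟪a, xh⟫ := by
        have hsplit : ⟪a, xh⟫ = ⟪a, xh - x (K n)⟫ + ⟪a, x (K n)⟫ := by
          rw [← inner_add_right]; congr 1; abel
        have hb1 : |⟪a, xh - x (K n)⟫| ≤ ‖a‖ * t := by
          rw [htdef]; exact abs_real_inner_le_norm _ _
        have hb2 : |⟪a, x (K n)⟫| ≤ ‖a‖ * ‖x (K n)‖ := abs_real_inner_le_norm _ _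
        have hxk : ‖x (K n)‖ ≤ ‖xstar‖ + r := by
          have := norm_sub_norm_le (x (K n)) xstar
          rw [← dist_eq_norm] at this
          linarith
        rw [abs_le] at hb1 hb2
        have : ‖a‖ * ‖x (K n)‖ ≤ ‖a‖ * (‖xstar‖ + r) := by gcongr
        linarith [hb1.1, hb2.1]
      have hkey : γh / 2 * t ^ 2 ≤ C1 + C2 * t := by
        have hCb : p (K n) ≤ |Cphi| := le_trans h3 (le_abs_self _)
        have hbb : -b ≤ |b| := neg_le_abs _
        rw [hC1def, hC2def]
        have hmr : γh / 2 * t ^ 2 ≤ p (K n) - ph - ⟪gradient f (x (K n)), xh - x (K n)⟫ := by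
          linarith [hminh']
        linarith [hmr, haffh, hin1, hin2, hCb, hbb]
      have htr2 : t ≤ r / 2 := by
        by_contra ht
        push_neg at ht
        have htpos : 0 < t := lt_trans (half_pos hrpos) ht
        have hA : 0 < 8 * C1 + 4 * C2 * r := by positivity
        have hB : (8 * C1 + 4 * C2 * r) / r ^ 2 ≤ γh :=
          le_trans hΓ0B hγhΓ0
        have h5 : (8 * C1 + 4 * C2 * r) / r ^ 2 * ((r / 2) * t)
            < (8 * C1 + 4 * C2 * r) / r ^ 2 * t ^ 2 := by
          apply mul_lt_mul_of_pos_left _ (by positivity)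
          nlinarith
        have h6 : (8 * C1 + 4 * C2 * r) / r ^ 2 * ((r / 2) * t)
            = (4 * C1 / r + 2 * C2) * t := by
          field_simp
          ring
        have h7 : (8 * C1 + 4 * C2 * r) / r ^ 2 * t ^ 2 ≤ γh * t ^ 2 :=
          mul_le_mul_of_nonneg_right hB (sq_nonneg t)
        have h8 : 4 * C1 / r * t < 2 * C1 := by
          rw [h6] at h5
          nlinarith [hkey]
        have h9 : 2 * C1 ≤ 4 * C1 / r * t := by
          have h10 : 4 * C1 / r * (r / 2) ≤ 4 * C1 / r * t := by
            apply mul_le_mul_of_nonneg_left (le_of_lt ht) (by positivity)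
          calc 2 * C1 = 4 * C1 / r * (r / 2) := by field_simp; ring
            _ ≤ _ := h10
        linarith
      have hxkB : x (K n) ∈ Metric.ball xstar r := by
        rw [Metric.mem_ball]
        linarith
      have hxhB : xh ∈ Metric.ball xstar r := by
        rw [Metric.mem_ball, dist_eq_norm]
        have heq : xh - xstar = (xh - x (K n)) + (x (K n) - xstar) := by abel
        have hbd := norm_add_le (xh - x (K n)) (x (K n) - xstar)
        rw [← heq, ← htdef] at hbd
        rw [dist_eq_norm] at h1
        calc ‖xh - xstar‖ ≤ t + ‖x (K n) - xstar‖ := hbd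
          _ < r / 2 + r / 2 := by
              apply add_lt_add_of_le_of_lt htr2 h1
          _ = r := by ring
      have hdesc := descent_lemma_aux f hf L _ (convex_ball xstar r) hLipB
        (x (K n)) xh hxkB hxhB
      rw [← htdef] at hdesc
      rw [psi, psi, hpk (K n), hph, ← EReal.coe_add, ← EReal.coe_add, ← EReal.coe_add,
        EReal.coe_lt_coe_iff] at hfail
      have hγhL : L ≤ (1 - δ) * γh := by
        have h11 : L / (1 - δ) ≤ γh := le_trans hΓ0L hγhΓ0
        rw [div_le_iff₀ (by linarith : (0:ℝ) < 1 - δ)] at h11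
        linarith [h11]
      have h12 : 0 ≤ ((1 - δ) * γh - L) * t ^ 2 :=
        mul_nonneg (by linarith) (sq_nonneg t)
      nlinarith [hminh', hdesc, hfail, h12]
  -- convergence of p along the shifted subsequence
  have hq_ub : ∀ n, p (K n + 1) ≤ ps + ⟪gradient f (x (K n)), xstar - x (K n + 1)⟫
      + γ (K n) / 2 * ‖xstar - x (K n)‖ ^ 2 := by
    intro n
    have hm := hM.isMin (K n) xstar
    rw [proxObj, proxObj, hps, hpk (K n + 1), ← EReal.coe_add, ← EReal.coe_add,
      EReal.coe_le_coe_iff] at hm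
    have hsplit : ⟪gradient f (x (K n)), xstar - x (K n)⟫
        = ⟪gradient f (x (K n)), xstar - x (K n + 1)⟫
          + ⟪gradient f (x (K n)), x (K n + 1) - x (K n)⟫ := by
      rw [← inner_add_right]; congr 1; abel
    nlinarith [hm, hsplit, sq_nonneg ‖x (K n + 1) - x (K n)‖, hγ0 (K n)]
  have hnu : Tendsto (fun n => ‖xstar - x (K n + 1)‖) atTop (𝓝 0) := by
    have h : Tendsto (fun n => xstar - x (K n + 1)) atTop (𝓝 (xstar - xstar)) :=
      tendsto_const_nhds.sub hu
    simpa using h.norm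
  have hnk : Tendsto (fun n => ‖xstar - x (K n)‖) atTop (𝓝 0) := by
    have h : Tendsto (fun n => xstar - x (K n)) atTop (𝓝 (xstar - xstar)) :=
      tendsto_const_nhds.sub hconv
    simpa using h.norm
  have hβ : Tendsto (fun n => G * ‖xstar - x (K n + 1)‖
      + Γ / 2 * ‖xstar - x (K n)‖ ^ 2) atTop (𝓝 0) := by
    have h1 := (hnu.const_mul G).add (((hnk.pow 2)).const_mul (Γ / 2))
    simpa using h1
  have hqlim : Tendsto (fun n => p (K n + 1)) atTop (𝓝 ps) := by
    rw [Metric.tendsto_nhds]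
    intro ε hε
    have hlow : ∀ᶠ n in atTop, ps - ε / 2 < p (K n + 1) := by
      have hlt : ((ps - ε / 2 : ℝ) : EReal) < φ xstar := by
        rw [hps]; exact_mod_cast (by linarith : ps - ε / 2 < ps)
      filter_upwards [hu.eventually (hlsc xstar _ hlt)] with n hn
      rw [hpk, gt_iff_lt, EReal.coe_lt_coe_iff] at hn
      exact hn
    have hup : ∀ᶠ n in atTop, p (K n + 1) ≤ ps + (G * ‖xstar - x (K n + 1)‖
        + Γ / 2 * ‖xstar - x (K n)‖ ^ 2) := by
      filter_upwards [hev2, hΓbd] with n h2 h3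
      have h4 := hq_ub n
      have h5 : ⟪gradient f (x (K n)), xstar - x (K n + 1)⟫ ≤ G * ‖xstar - x (K n + 1)‖ := by
        have hb := abs_real_inner_le_norm (gradient f (x (K n))) (xstar - x (K n + 1))
        rw [abs_le] at hb
        have : ‖gradient f (x (K n))‖ * ‖xstar - x (K n + 1)‖
            ≤ G * ‖xstar - x (K n + 1)‖ := by gcongr
        linarith [hb.2]
      have h6 : γ (K n) / 2 * ‖xstar - x (K n)‖ ^ 2 ≤ Γ / 2 * ‖xstar - x (K n)‖ ^ 2 := by
        apply mul_le_mul_of_nonneg_right _ (sq_nonneg _)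
        linarith
      linarith
    have hsm : ∀ᶠ n in atTop, G * ‖xstar - x (K n + 1)‖
        + Γ / 2 * ‖xstar - x (K n)‖ ^ 2 < ε / 2 :=
      hβ.eventually (eventually_lt_nhds (by linarith : (0:ℝ) < ε / 2))
    filter_upwards [hlow, hup, hsm] with n h1 h2 h3
    rw [Real.dist_eq, abs_lt]
    constructor <;> linarith
  have hφu : Tendsto (fun n => φ (x (K n + 1))) atTop (𝓝 (φ xstar)) := by
    rw [hps]
    have heq : (fun n => φ (x (K n + 1))) = fun n => ((p (K n + 1) : ℝ) : EReal) :=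
      funext fun n => hpk _
    rw [heq]
    exact EReal.tendsto_coe.2 hqlim
  -- the subgradient sequence
  have hv : Tendsto (fun n => -gradient f (x (K n))
      - γ (K n) • (x (K n + 1) - x (K n))) atTop (𝓝 (-gradient f xstar)) := by
    have h1 : Tendsto (fun n => -gradient f (x (K n))) atTop (𝓝 (-gradient f xstar)) :=
      hgconv.neg
    have h2 : Tendsto (fun n => γ (K n) • (x (K n + 1) - x (K n))) atTop (𝓝 0) := by
      apply squeeze_zero_norm' (a := fun n => Γ * ‖x (K n + 1) - x (K n)‖)
      · filter_upwards [hΓbd] with n hn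
        rw [norm_smul, Real.norm_eq_abs, abs_of_pos (hγ0 _)]
        gcongr
      · simpa using (hdnorm.comp hKtop).const_mul Γ
    simpa using h1.sub h2
  refine ⟨hphistar, fun n => x (K n + 1),
    fun n => -gradient f (x (K n)) - γ (K n) • (x (K n + 1) - x (K n)),
    hu, hφu, hv, fun n => ?_⟩
  exact prox_frechet_aux f φ hbot (x (K n)) (γ (K n)) (hγ0 _) _
    (hM.isMin (K n)) (hM.dom (K n + 1))
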